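/- arXiv:0711.2998 — 9 statements merged into one kernel-verified Lean document; each statement's English description precedes it below -/
import Mathlib

section
/- If G is an (n,k)-generator, then the number of members of G of size at least p = ⌈n/k⌉ is at least k - r = n - (p-1)k, where r = pk - n. Moreover, if this number equals k - r exactly, then the members of G of size at least p are pairwise disjoint. -/
/-- A family `G` of nonempty subsets of `[n]` is an `(n,k)`-generator if every nonempty
subset of `[n]` is a disjoint union of at most `k` members of `G`. -/
def IsGenerator (n k : ℕ) (G : Finset (Finset (Fin n))) : Prop :=
  (∀ g ∈ G, g.Nonempty) ∧
  ∀ X : Finset (Fin n), X.Nonempty →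
    ∃ S : Finset (Finset (Fin n)), S ⊆ G ∧ S.card ≤ k ∧
      (S : Set (Finset (Fin n))).Pairwise Disjoint ∧ X = S.sup id

/-- Core counting lemma: any transversal of the big sets has at least `k - r` elements. -/
lemma core (n k p r : ℕ) (hn : 1 ≤ n) (hpk : p * k = n + r) (hp : 1 ≤ p)
    (G : Finset (Finset (Fin n))) (hG : IsGenerator n k G)
    (T : Finset (Fin n)) (hT : ∀ g ∈ G, p ≤ g.card → ¬ Disjoint g T) :
    k - r ≤ T.card := by
  set X : Finset (Fin n) := Finset.univ \ T with hXdef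
  have hXcard : X.card = n - T.card := by
    rw [hXdef, Finset.card_sdiff_of_subset (Finset.subset_univ T), Finset.card_univ, Fintype.card_fin]
  by_cases hX : X.Nonempty
  · obtain ⟨S, hSG, hSk, hSdisj, hXS⟩ := hG.2 X hX
    have hsub : ∀ s ∈ S, s ⊆ X := by
      intro s hs
      rw [hXS]
      exact Finset.le_sup (f := id) hs
    have hsmall : ∀ s ∈ S, s.card ≤ p - 1 := by
      intro s hs
      by_contra h
      push_neg at h
      have hps : p ≤ s.card := by omega
      refine hT s (hSG hs) hps ?_
      have hd : Disjoint X T := by rw [hXdef]; exact Finset.sdiff_disjoint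
      exact hd.mono_left (hsub s hs)
    have hXb : X = S.biUnion id := by rw [hXS, Finset.sup_eq_biUnion]
    have hcard : X.card ≤ k * (p - 1) := by
      rw [hXb]
      rw [show S.biUnion id = S.biUnion (fun s => s) from rfl,
        Finset.card_biUnion (fun x hx y hy hxy => hSdisj hx hy hxy)]
      calc ∑ s ∈ S, (id s).card ≤ ∑ _s ∈ S, (p - 1) :=
            Finset.sum_le_sum (fun s hs => hsmall s hs)
        _ = S.card * (p - 1) := by rw [Finset.sum_const, smul_eq_mul]
        _ ≤ k * (p - 1) := Nat.mul_le_mul_right _ hSk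
    have hexp : k * (p - 1) + k = p * k := by
      cases p with
      | zero => omega
      | succ q => simp only [Nat.add_sub_cancel]; ring
    have hTn : T.card ≤ n := by
      simpa [Fintype.card_fin] using Finset.card_le_univ T
    omega
  · have : X.card = 0 := by
      rw [Finset.not_nonempty_iff_eq_empty] at hX
      rw [hX]; rfl
    have hkp : k ≤ p * k := Nat.le_mul_of_pos_left k hp
    omega

theorem stmt5 (n k p r : ℕ) (hk : 1 ≤ k) (hn : 1 ≤ n)
    (hpr : n = p * k - r) (hr : r < k)
    (G : Finset (Finset (Fin n))) (hG : IsGenerator n k G) :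
    k - r ≤ (G.filter fun g => p ≤ g.card).card ∧
    ((G.filter fun g => p ≤ g.card).card = k - r →
      ((G.filter fun g => p ≤ g.card) : Set (Finset (Fin n))).Pairwise Disjoint) := by
  classical
  have hpk : p * k = n + r := by omega
  have hp : 1 ≤ p := by
    rcases Nat.eq_zero_or_pos p with h | h
    · subst h; simp at hpk; omega
    · exact h
  set B := G.filter (fun g => p ≤ g.card) with hB
  have hz : Fin n := ⟨0, hn⟩
  set t : Finset (Fin n) → Fin n := fun g => if h : g.Nonempty then h.choose else hz with ht
  have htmem : ∀ g ∈ G, t g ∈ g := by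
    intro g hg
    have hne : g.Nonempty := hG.1 g hg
    simp only [ht, dif_pos hne]
    exact hne.choose_spec
  have hmain : k - r ≤ B.card := by
    have := core n k p r hn hpk hp G hG (B.image t) ?_
    · calc k - r ≤ (B.image t).card := this
        _ ≤ B.card := Finset.card_image_le
    · intro g hg hgp
      have hgB : g ∈ B := by rw [hB]; exact Finset.mem_filter.2 ⟨hg, hgp⟩
      rw [Finset.not_disjoint_iff]
      exact ⟨t g, htmem g hg, Finset.mem_image_of_mem t hgB⟩
  refine ⟨hmain, ?_⟩
  intro hcard g₁ hg₁ g₂ hg₂ hne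
  by_contra hdisj
  rw [Finset.not_disjoint_iff] at hdisj
  obtain ⟨x, hx1, hx2⟩ := hdisj
  have hg₁B : g₁ ∈ B := Finset.mem_coe.mp hg₁
  have hg₂B : g₂ ∈ B := Finset.mem_coe.mp hg₂
  set t' : Finset (Fin n) → Fin n := fun g => if g = g₁ ∨ g = g₂ then x else t g with ht'
  have hT'card : (B.image t').card ≤ B.card - 1 := by
    have himg : B.image t' = (B.erase g₂).image t' := by
      apply Finset.Subset.antisymm
      · intro a ha
        rw [Finset.mem_image] at ha ⊢
        obtain ⟨g, hg, hga⟩ := ha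
        by_cases h : g = g₂
        · refine ⟨g₁, Finset.mem_erase.2 ⟨hne, hg₁B⟩, ?_⟩
          subst h
          simp only [ht'] at hga ⊢
          simpa using hga
        · exact ⟨g, Finset.mem_erase.2 ⟨h, hg⟩, hga⟩
      · exact Finset.image_subset_image (Finset.erase_subset _ _)
    rw [himg]
    calc ((B.erase g₂).image t').card ≤ (B.erase g₂).card := Finset.card_image_le
      _ = B.card - 1 := Finset.card_erase_of_mem hg₂B
  have hcore := core n k p r hn hpk hp G hG (B.image t') ?_
  · omega
  · intro g hg hgp
    have hgB : g ∈ B := Finset.mem_filter.2 ⟨hg, hgp⟩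
    rw [Finset.not_disjoint_iff]
    refine ⟨t' g, ?_, Finset.mem_image_of_mem t' hgB⟩
    simp only [ht']
    by_cases h : g = g₁ ∨ g = g₂
    · rw [if_pos h]
      rcases h with h | h <;> subst h <;> assumption
    · rw [if_neg h]
      exact htmem g hg
end

section
/- Let G be an (n,k)-generator of minimum size, let p = ⌈n/k⌉, and let z ∈ [n] satisfy |G(z)| ≥ 2^{p-1}, where G(z) = {g ∈ G : z ∈ g}. If the minimum size of an (n-1,k)-generator equals constr(n-1,k), then |G(z)| = 2^{p-1} and the minimum size of an (n,k)-generator equals constr(n,k). -/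
/-- `p(n,k) = ⌈n/k⌉`. -/
def pCeil (n k : ℕ) : ℕ := (n + k - 1) / k

/-- `constr(n,k) = r·(2^{p−1} − 1) + (k − r)·(2^p − 1)` with `r = pk − n`. -/
def constr (n k : ℕ) : ℕ :=
  (pCeil n k * k - n) * (2 ^ (pCeil n k - 1) - 1) +
    (k - (pCeil n k * k - n)) * (2 ^ pCeil n k - 1)

/-- the minimum size of an `(n,k)`-generator. -/
noncomputable def opt (n k : ℕ) : ℕ :=
  sInf {m | ∃ G : Finset (Finset (Fin n)), IsGenerator n k G ∧ G.card = m}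

lemma constr_succ (m k : ℕ) (hk : 1 ≤ k) :
    constr (m + 1) k = constr m k + 2 ^ (pCeil (m + 1) k - 1) := by
  obtain ⟨q, s, hs, rfl⟩ : ∃ q s, s < k ∧ m = k * q + s :=
    ⟨m / k, m % k, Nat.mod_lt _ hk, (Nat.div_add_mod m k).symm ▸ rfl⟩
  have hkq : k * (q + 1) = k * q + k := by ring
  have hp : pCeil (k * q + s + 1) k = q + 1 := by
    unfold pCeil
    have h : k * q + s + 1 + k - 1 = k * (q + 1) + s := by omega
    rw [h, Nat.mul_add_div (by omega), Nat.div_eq_of_lt (by omega)]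
  have h2 : (2:ℕ) ^ (q + 1) = 2 * 2 ^ q := by ring
  have h1 : 1 ≤ (2:ℕ) ^ q := Nat.one_le_two_pow
  have h3 : 1 ≤ (2:ℕ) * 2 ^ q := by omega
  rcases Nat.eq_zero_or_pos s with rfl | hs1
  · have hp' : pCeil (k * q + 0) k = q := by
      unfold pCeil
      rcases Nat.eq_zero_or_pos q with rfl | hq
      · rw [Nat.div_eq_of_lt (by omega)]
      · have h : k * q + 0 + k - 1 = k * q + (k - 1) := by omega
        rw [h, Nat.mul_add_div (by omega), Nat.div_eq_of_lt (by omega)]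
        omega
    unfold constr
    rw [hp, hp']
    simp only [h2, Nat.add_sub_cancel]
    have e1 : (q + 1) * k - (k * q + 0 + 1) = k - 1 := by
      have : (q+1)*k = k*q + k := by ring
      omega
    have e2 : k - (k - 1) = 1 := by omega
    have e3 : q * k - (k * q + 0) = 0 := by
      have : q*k = k*q := by ring
      omega
    have e4 : k - 0 = k := by omega
    rw [e1, e2, e3, e4]
    zify [h1, h3, (by omega : 1 ≤ k)]
    ring
  · have hp' : pCeil (k * q + s) k = q + 1 := by
      unfold pCeil
      have h : k * q + s + k - 1 = k * (q + 1) + (s - 1) := by omega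
      rw [h, Nat.mul_add_div (by omega), Nat.div_eq_of_lt (by omega)]
    unfold constr
    rw [hp, hp']
    simp only [h2, Nat.add_sub_cancel]
    have e1 : (q+1) * k - (k*q + s + 1) = k - s - 1 := by
      have : (q+1)*k = k*q + k := by ring
      omega
    have e2 : (q+1) * k - (k*q + s) = k - s := by
      have : (q+1)*k = k*q + k := by ring
      omega
    rw [e1, e2]
    have e3 : k - (k - s - 1) = s + 1 := by omega
    have e4 : k - (k - s) = s := by omega
    rw [e3, e4]
    zify [h1, h3, (by omega : 1 ≤ k - s), (by omega : s ≤ k)]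
    ring

def Bset (n k j : ℕ) : Finset (Fin n) := Finset.univ.filter (fun i => i.val % k = j)

def Gen (n k : ℕ) : Finset (Finset (Fin n)) :=
  (Finset.range k).biUnion (fun j => (Bset n k j).powerset.filter (·.Nonempty))

lemma gen_isGenerator (n k : ℕ) (hk : 1 ≤ k) : IsGenerator n k (Gen n k) := by
  constructor
  · intro g hg
    simp only [Gen, Finset.mem_biUnion, Finset.mem_filter] at hg
    obtain ⟨j, _, _, h⟩ := hg
    exact h
  · intro X hX
    classical
    refine ⟨(X.image (fun i => i.val % k)).image (fun j => X.filter (fun i => i.val % k = j)),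
      ?_, ?_, ?_, ?_⟩
    · intro a ha
      obtain ⟨j, hj, rfl⟩ := Finset.mem_image.mp ha
      obtain ⟨i₀, hi₀, rfl⟩ := Finset.mem_image.mp hj
      simp only [Gen, Finset.mem_biUnion, Finset.mem_filter, Finset.mem_range,
        Finset.mem_powerset]
      refine ⟨i₀.val % k, Nat.mod_lt _ hk, ?_, ⟨i₀, ?_⟩⟩
      · intro x hx
        rw [Finset.mem_filter] at hx
        simp [Bset, hx.2]
      · simp [hi₀]
    · calc ((X.image (fun i => i.val % k)).image
            (fun j => X.filter (fun i => i.val % k = j))).card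
          ≤ (X.image (fun i => i.val % k)).card := Finset.card_image_le
        _ ≤ (Finset.range k).card := by
            apply Finset.card_le_card
            intro j hj
            obtain ⟨i, _, rfl⟩ := Finset.mem_image.mp hj
            exact Finset.mem_range.mpr (Nat.mod_lt _ hk)
        _ = k := Finset.card_range k
    · intro a ha b hb hab
      rw [Finset.mem_coe] at ha hb
      obtain ⟨j₁, _, rfl⟩ := Finset.mem_image.mp ha
      obtain ⟨j₂, _, rfl⟩ := Finset.mem_image.mp hb
      have hj : j₁ ≠ j₂ := by rintro rfl; exact hab rfl
      rw [Finset.disjoint_left]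
      intro x hx₁ hx₂
      rw [Finset.mem_filter] at hx₁ hx₂
      exact hj (hx₁.2 ▸ hx₂.2)
    · ext x
      rw [Finset.mem_sup]
      constructor
      · intro hx
        refine ⟨X.filter (fun i => i.val % k = x.val % k), Finset.mem_image.mpr ⟨x.val % k,
          Finset.mem_image.mpr ⟨x, hx, rfl⟩, rfl⟩, ?_⟩
        simp [hx]
      · rintro ⟨v, hv, hxv⟩
        obtain ⟨j, _, rfl⟩ := Finset.mem_image.mp hv
        exact (Finset.mem_filter.mp hxv).1


lemma count_res (n k j : ℕ) (hk : 0 < k) (hj : j < k) :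
    ((Finset.range n).filter fun i => i % k = j).card = (n + k - 1 - j) / k := by
  have key : ∀ q : ℕ, q < (n + k - 1 - j) / k ↔ k * q + j < n := by
    intro q
    rw [show (q < (n + k - 1 - j) / k) = (q + 1 ≤ (n + k - 1 - j) / k) from rfl,
      Nat.le_div_iff_mul_le hk, add_mul, one_mul, mul_comm]
    omega
  rw [← Finset.card_range ((n + k - 1 - j) / k)]
  apply Finset.card_bij' (fun i _ => i / k) (fun t _ => j + k * t)
  · intro i hi
    simp only [Finset.mem_filter, Finset.mem_range] at hi
    rw [Finset.mem_range, key]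
    have := Nat.div_add_mod i k
    omega
  · intro t ht
    rw [Finset.mem_range] at ht
    rw [key] at ht
    simp only [Finset.mem_filter, Finset.mem_range]
    constructor
    · omega
    · rw [Nat.add_mul_mod_self_left, Nat.mod_eq_of_lt hj]
  · intro i hi
    simp only [Finset.mem_filter, Finset.mem_range] at hi
    have := Nat.div_add_mod i k
    omega
  · intro t ht
    rw [Nat.add_mul_div_left _ _ hk, Nat.div_eq_of_lt hj]
    omega

lemma gen_card (n k : ℕ) (hk : 1 ≤ k) :
    (Gen n k).card = ∑ j ∈ Finset.range k, (2 ^ ((n + k - 1 - j) / k) - 1) := by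
  have hB : ∀ j, (Bset n k j).card = ((Finset.range n).filter fun i => i % k = j).card := by
    intro j
    refine Finset.card_bij (fun (i : Fin n) _ => (i : ℕ)) ?_ ?_ ?_
    · intro a ha
      rw [Bset, Finset.mem_filter] at ha
      simp [ha.2, a.isLt]
    · intro a _ b _ h
      exact Fin.val_injective h
    · intro b hb
      simp only [Finset.mem_filter, Finset.mem_range] at hb
      exact ⟨⟨b, hb.1⟩, by simp [Bset, hb.2], rfl⟩
  rw [Gen, Finset.card_biUnion]
  · apply Finset.sum_congr rfl
    intro j hj
    have h1 : (Bset n k j).powerset.filter (·.Nonempty) = (Bset n k j).powerset.erase ∅ := by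
      ext g
      simp [Finset.mem_erase, Finset.nonempty_iff_ne_empty, and_comm]
    rw [h1, Finset.card_erase_of_mem (Finset.empty_mem_powerset _), Finset.card_powerset,
      hB j, count_res n k j hk (Finset.mem_range.mp hj)]
  · intro j₁ h₁ j₂ h₂ hne
    simp only [Function.onFun]
    rw [Finset.disjoint_left]
    intro g hg₁ hg₂
    rw [Finset.mem_filter, Finset.mem_powerset] at hg₁ hg₂
    obtain ⟨x, hx⟩ := hg₁.2
    have e₁ := Finset.mem_filter.mp (hg₁.1 hx)
    have e₂ := Finset.mem_filter.mp (hg₂.1 hx)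
    exact hne (e₁.2 ▸ e₂.2)

lemma sum_eq_constr (n k : ℕ) (hk : 1 ≤ k) (hn : 1 ≤ n) :
    ∑ j ∈ Finset.range k, (2 ^ ((n + k - 1 - j) / k) - 1) = constr n k := by
  set p := pCeil n k with hpdef
  have hpk : p = (n + k - 1) / k := rfl
  have hdm := Nat.div_add_mod (n + k - 1) k
  have hml := Nat.mod_lt (n + k - 1) hk
  rw [← hpk] at hdm
  have hcomm : p * k = k * p := mul_comm _ _
  have hp1 : p * k ≤ n + k - 1 := by omega
  have hp2 : n + k - 1 < p * k + k := by omega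
  have hp3 : 1 ≤ p := (Nat.one_le_div_iff hk).mpr (by omega)
  have hmul : p * k = (p - 1) * k + k := by
    obtain ⟨p0, hp0⟩ : ∃ p0, p = p0 + 1 := ⟨p - 1, by omega⟩
    rw [hp0]
    simp
    ring
  set r := p * k - n with hrdef
  have hr : r < k := by omega
  have hc : ∀ j ∈ Finset.range k, (2:ℕ) ^ ((n + k - 1 - j) / k) - 1 =
      if j < k - r then 2 ^ p - 1 else 2 ^ (p - 1) - 1 := by
    intro j hj
    rw [Finset.mem_range] at hj
    split_ifs with h
    · congr 2
      apply Nat.div_eq_of_lt_le <;> [skip; rw [show (p+1)*k = p*k + k from by ring]] <;> omega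
    · congr 2
      apply Nat.div_eq_of_lt_le <;> [skip; rw [show (p-1+1)*k = (p-1)*k + k from by ring]] <;> omega
  rw [Finset.sum_congr rfl hc, Finset.sum_ite, Finset.sum_const, Finset.sum_const,
    smul_eq_mul, smul_eq_mul]
  have h1 : (Finset.range k).filter (fun j => j < k - r) = Finset.range (k - r) := by
    ext j; simp only [Finset.mem_filter, Finset.mem_range]; omega
  have h2 : ((Finset.range k).filter (fun j => ¬ j < k - r)).card = r := by
    have := Finset.card_filter_add_card_filter_not
      (s := Finset.range k) (p := fun j => j < k - r)
    rw [h1] at this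
    simp only [Finset.card_range] at this ⊢
    omega
  rw [h1, h2, Finset.card_range, constr, ← hpdef, ← hrdef]
  ring

lemma gen_minus (m k : ℕ) (G : Finset (Finset (Fin (m + 1)))) (hG : IsGenerator (m + 1) k G)
    (z : Fin (m + 1)) :
    ∃ G' : Finset (Finset (Fin m)), IsGenerator m k G' ∧
      G'.card = (G.filter fun g => ¬ z ∈ g).card := by
  classical
  set s : Fin m → Fin (m + 1) := z.succAbove with hs
  have hsinj : Function.Injective s := Fin.succAbove_right_injective
  set φ : Finset (Fin (m + 1)) → Finset (Fin m) :=
    fun g => g.preimage s (hsinj.injOn) with hφ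
  have hmemφ : ∀ (g : Finset (Fin (m + 1))) (x : Fin m), x ∈ φ g ↔ s x ∈ g := by
    intro g x; simp [hφ, Finset.mem_preimage]
  have himg : ∀ g : Finset (Fin (m + 1)), z ∉ g → (φ g).image s = g := by
    intro g hz
    ext x
    rw [Finset.mem_image]
    constructor
    · rintro ⟨y, hy, rfl⟩
      exact (hmemφ g y).mp hy
    · intro hx
      obtain ⟨y, hy⟩ := Fin.exists_succAbove_eq (show x ≠ z from fun h => hz (h ▸ hx))
      exact ⟨y, (hmemφ g y).mpr ((show s y = x from hy) ▸ hx), hy⟩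
  refine ⟨(G.filter fun g => ¬ z ∈ g).image φ, ⟨?_, ?_⟩, ?_⟩
  · -- nonempty
    intro g' hg'
    obtain ⟨g, hg, rfl⟩ := Finset.mem_image.mp hg'
    rw [Finset.mem_filter] at hg
    obtain ⟨x, hx⟩ := hG.1 g hg.1
    obtain ⟨y, hy⟩ := Fin.exists_succAbove_eq (show x ≠ z from fun h => hg.2 (h ▸ hx))
    exact ⟨y, (hmemφ g y).mpr ((show s y = x from hy) ▸ hx)⟩
  · -- generating
    intro X hX
    obtain ⟨x₀, hx₀⟩ := hX
    obtain ⟨S, hSG, hSk, hSdisj, hSsup⟩ := hG.2 (X.image s) ⟨s x₀, Finset.mem_image_of_mem s hx₀⟩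
    have hzS : ∀ g ∈ S, ¬ z ∈ g := by
      intro g hg hzg
      have : z ∈ X.image s := by
        rw [hSsup, Finset.mem_sup]
        exact ⟨g, hg, hzg⟩
      obtain ⟨y, _, hy⟩ := Finset.mem_image.mp this
      exact Fin.succAbove_ne z y hy
    refine ⟨S.image φ, ?_, ?_, ?_, ?_⟩
    · apply Finset.image_subset_image
      intro g hg
      rw [Finset.mem_filter]
      exact ⟨hSG hg, hzS g hg⟩
    · exact le_trans Finset.card_image_le hSk
    · intro a ha b hb hab
      rw [Finset.mem_coe] at ha hb
      obtain ⟨g₁, hg₁, rfl⟩ := Finset.mem_image.mp ha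
      obtain ⟨g₂, hg₂, rfl⟩ := Finset.mem_image.mp hb
      have hg12 : g₁ ≠ g₂ := fun h => hab (h ▸ rfl)
      have hdisj := hSdisj (Finset.mem_coe.mpr hg₁) (Finset.mem_coe.mpr hg₂) hg12
      rw [Finset.disjoint_left] at hdisj ⊢
      intro x hx₁ hx₂
      exact hdisj ((hmemφ g₁ x).mp hx₁) ((hmemφ g₂ x).mp hx₂)
    · ext x
      rw [Finset.mem_sup]
      constructor
      · intro hx
        have : s x ∈ X.image s := Finset.mem_image_of_mem s hx
        rw [hSsup, Finset.mem_sup] at this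
        obtain ⟨g, hg, hxg⟩ := this
        exact ⟨φ g, Finset.mem_image_of_mem φ hg, (hmemφ g x).mpr hxg⟩
      · rintro ⟨v, hv, hxv⟩
        obtain ⟨g, hg, rfl⟩ := Finset.mem_image.mp hv
        have : s x ∈ X.image s := by
          rw [hSsup, Finset.mem_sup]
          exact ⟨g, hg, (hmemφ g x).mp hxv⟩
        obtain ⟨y, hy, hyx⟩ := Finset.mem_image.mp this
        rwa [← hsinj hyx]
  · -- card
    apply Finset.card_image_of_injOn
    intro g₁ h₁ g₂ h₂ h
    rw [Finset.mem_coe, Finset.mem_filter] at h₁ h₂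
    rw [← himg g₁ h₁.2, ← himg g₂ h₂.2, h]

theorem stmt6 (n k : ℕ) (hk : 1 ≤ k) (hn : 1 ≤ n)
    (G : Finset (Finset (Fin n))) (hG : IsGenerator n k G)
    (hopt : G.card = opt n k) (z : Fin n)
    (hz : 2 ^ (pCeil n k - 1) ≤ (G.filter fun g => z ∈ g).card)
    (hprev : opt (n - 1) k = constr (n - 1) k) :
    (G.filter fun g => z ∈ g).card = 2 ^ (pCeil n k - 1) ∧
      opt n k = constr n k := by
  obtain ⟨m, rfl⟩ : ∃ m, n = m + 1 := ⟨n - 1, by omega⟩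
  have hm1 : m + 1 - 1 = m := rfl
  rw [hm1] at hprev
  obtain ⟨G', hG', hcard'⟩ := gen_minus m k G hG z
  have h1 : opt m k ≤ G'.card := Nat.sInf_le ⟨G', hG', rfl⟩
  have hsplit : (G.filter fun g => z ∈ g).card + (G.filter fun g => ¬ z ∈ g).card = G.card :=
    Finset.card_filter_add_card_filter_not _
  have h2 : opt (m + 1) k ≤ constr (m + 1) k :=
    Nat.sInf_le ⟨Gen (m + 1) k, gen_isGenerator _ _ hk, by
      rw [gen_card _ _ hk, sum_eq_constr _ _ hk (by omega)]⟩
  have h3 := constr_succ m k hk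
  rw [hcard'] at h1
  omega
end

section
/- Let G be an (n,k)-generator and z ∈ [n]. Suppose G − z ⊆ P(V₁) ∪ ⋯ ∪ P(V_k) for a partition {V₁,...,V_k} of [n]∖{z} into nonempty parts. Then there exists an index i such that z sees V_i, i.e., {g ∩ V_i : g ∈ G, z ∈ g} equals the full powerset P(V_i). -/
theorem stmt9 (n k : ℕ) (G : Finset (Finset (Fin n))) (hG : IsGenerator n k G)
    (z : Fin n) (V : Fin k → Finset (Fin n))
    (hne : ∀ i, (V i).Nonempty)
    (hdisj : ∀ i j, i ≠ j → Disjoint (V i) (V j))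
    (hcover : Finset.univ.biUnion V = Finset.univ.erase z)
    (hsub : ∀ g ∈ G, z ∉ g → ∃ i, g ⊆ V i) :
    ∃ i, ∀ U ⊆ V i, ∃ g ∈ G, z ∈ g ∧ g ∩ V i = U := by
  classical
  by_contra hcon
  push_neg at hcon
  choose U hU hbad using hcon
  set X : Finset (Fin n) := insert z (Finset.univ.biUnion U) with hX
  have hzX : z ∈ X := Finset.mem_insert_self _ _
  obtain ⟨S, hSG, hSk, hSd, hSX⟩ := hG.2 X ⟨z, hzX⟩
  have hzX' : z ∈ S.sup id := hSX ▸ hzX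
  obtain ⟨g₀, hg₀S, hzg₀⟩ := Finset.mem_sup.mp hzX'
  have hk : 1 ≤ k := le_trans (Finset.card_pos.mpr ⟨g₀, hg₀S⟩) hSk
  set T := S.erase g₀ with hT
  have hTz : ∀ g ∈ T, z ∉ g := by
    intro g hg hzg
    have hne' : g ≠ g₀ := Finset.ne_of_mem_erase hg
    have hd : Disjoint g g₀ := hSd (Finset.mem_coe.mpr (Finset.mem_of_mem_erase hg))
      (Finset.mem_coe.mpr hg₀S) hne'
    exact Finset.disjoint_left.mp hd hzg hzg₀
  have hTsub : ∀ g ∈ T, ∃ j, g ⊆ V j := fun g hg =>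
    hsub g (hSG (Finset.mem_of_mem_erase hg)) (hTz g hg)
  choose f hf using hTsub
  set I : Finset (Fin k) := T.attach.image (fun g => f g.1 g.2) with hI
  have hIcard : I.card < k := by
    calc I.card ≤ T.attach.card := Finset.card_image_le
      _ = T.card := Finset.card_attach
      _ ≤ S.card - 1 := by
          have : T.card = S.card - 1 := Finset.card_erase_of_mem hg₀S
          omega
      _ < k := by omega
  have hex : ∃ i, i ∉ I := by
    by_contra h
    push_neg at h
    have : (Finset.univ : Finset (Fin k)) ⊆ I := fun i _ => h i
    have := Finset.card_le_card this
    simp [Fintype.card_fin] at this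
    omega
  obtain ⟨i, hiI⟩ := hex
  have hVz : ∀ x ∈ V i, x ≠ z := by
    intro x hx
    have : x ∈ Finset.univ.erase z := hcover ▸ Finset.mem_biUnion.mpr ⟨i, Finset.mem_univ i, hx⟩
    exact Finset.ne_of_mem_erase this
  have hkey : g₀ ∩ V i = U i := by
    apply Finset.Subset.antisymm
    · intro x hx
      rw [Finset.mem_inter] at hx
      have hxX : x ∈ X := hSX ▸ (Finset.le_sup (f := id) hg₀S) hx.1
      have hxz : x ≠ z := hVz x hx.2
      have : x ∈ Finset.univ.biUnion U := by
        rcases Finset.mem_insert.mp hxX with h | h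
        · exact absurd h hxz
        · exact h
      obtain ⟨j, _, hxj⟩ := Finset.mem_biUnion.mp this
      rcases eq_or_ne j i with rfl | hji
      · exact hxj
      · exact absurd hx.2 (Finset.disjoint_left.mp (hdisj j i hji) (hU j hxj))
    · intro x hx
      have hxV : x ∈ V i := hU i hx
      have hxX : x ∈ X := Finset.mem_insert_of_mem
        (Finset.mem_biUnion.mpr ⟨i, Finset.mem_univ i, hx⟩)
      have : x ∈ S.sup id := hSX ▸ hxX
      obtain ⟨g, hgS, hxg⟩ := Finset.mem_sup.mp this
      rcases eq_or_ne g g₀ with rfl | hne'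
      · exact Finset.mem_inter.mpr ⟨hxg, hxV⟩
      · exfalso
        have hgT : g ∈ T := Finset.mem_erase.mpr ⟨hne', hgS⟩
        have hfi : f g hgT ≠ i := by
          intro h
          exact hiI (h ▸ Finset.mem_image.mpr ⟨⟨g, hgT⟩, Finset.mem_attach _ _, rfl⟩)
        exact Finset.disjoint_left.mp (hdisj _ _ hfi) (hf g hgT hxg) hxV
  exact hbad i g₀ (hSG hg₀S) hzg₀ hkey
end

section
/- Let G be an (n,k)-generator, z ∈ [n], and suppose G − z ⊆ P(V₁) ∪ ⋯ ∪ P(V_k) for a partition {V₁,...,V_k} of [n]∖{z} into nonempty parts. If z sees V₁ but does not strongly see V₁, then |G(z)| ≥ 2^{|V₁|} + m − 1, where m = min_{i=2,...,k} |V_i|. -/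
theorem stmt10 (n k m : ℕ) (G : Finset (Finset (Fin n))) (hG : IsGenerator n k G)
    (z : Fin n) (V : Fin k → Finset (Fin n)) (i₀ : Fin k)
    (hne : ∀ i, (V i).Nonempty)
    (hdisj : ∀ i j, i ≠ j → Disjoint (V i) (V j))
    (hcover : Finset.univ.biUnion V = Finset.univ.erase z)
    (hsub : ∀ g ∈ G, z ∉ g → ∃ i, g ⊆ V i)
    (hsees : ∀ U ⊆ V i₀, ∃ g ∈ G, z ∈ g ∧ g ∩ V i₀ = U)
    (hnstrong : ¬ ∀ U ⊆ V i₀, insert z U ∈ G)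
    (hm1 : ∀ i, i ≠ i₀ → m ≤ (V i).card)
    (hm2 : ∃ i, i ≠ i₀ ∧ (V i).card = m) :
    2 ^ (V i₀).card + m - 1 ≤ (G.filter fun g => z ∈ g).card := by
  classical
  obtain ⟨hGne, hGgen⟩ := hG
  -- z is in no part
  have hzV : ∀ i, z ∉ V i := by
    intro i hzi
    have : z ∈ Finset.univ.biUnion V := Finset.mem_biUnion.mpr ⟨i, Finset.mem_univ i, hzi⟩
    rw [hcover] at this
    exact (Finset.mem_erase.mp this).1 rfl
  have hdisj' : ∀ i j : Fin k, i ≠ j → ∀ a : Fin n, a ∈ V i → a ∈ V j → False := by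
    intro i j hij a h1 h2
    exact Finset.disjoint_left.mp (hdisj i j hij) h1 h2
  obtain ⟨j₁, hj₁, hj₁card⟩ := hm2
  have hm_pos : 1 ≤ m := by
    rw [← hj₁card]; exact Finset.card_pos.mpr (hne j₁)
  -- choose a minimal bad set U₀
  have hUne : ((V i₀).powerset.filter (fun U => insert z U ∉ G)).Nonempty := by
    push_neg at hnstrong
    obtain ⟨U, hU1, hU2⟩ := hnstrong
    exact ⟨U, Finset.mem_filter.mpr ⟨Finset.mem_powerset.mpr hU1, hU2⟩⟩
  obtain ⟨U₀, hU₀mem, hU₀min⟩ : ∃ U₀ ∈ ((V i₀).powerset.filter (fun U => insert z U ∉ G)),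
      ∀ x ∈ ((V i₀).powerset.filter (fun U => insert z U ∉ G)), ¬ x < U₀ := by
    obtain ⟨U, hU1, hU2⟩ := Set.Finite.exists_minimal (Finset.finite_toSet _)
      (Finset.coe_nonempty.mpr hUne)
    exact ⟨U, hU1, fun x hx hlt => hlt.not_ge (hU2 hx hlt.le)⟩
  have hU₀sub : U₀ ⊆ V i₀ := Finset.mem_powerset.mp (Finset.mem_filter.mp hU₀mem).1
  have hU₀G : insert z U₀ ∉ G := (Finset.mem_filter.mp hU₀mem).2
  have hmin : ∀ A, A ⊂ U₀ → insert z A ∈ G := by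
    intro A hA
    by_contra hAG
    exact hU₀min A
      (Finset.mem_filter.mpr ⟨Finset.mem_powerset.mpr (hA.subset.trans hU₀sub), hAG⟩) hA
  -- the three families
  set R : Finset (Finset (Fin n)) :=
    G.filter (fun g => z ∈ g ∧ g ∩ V i₀ ⊆ U₀ ∧ ∃ i, i ≠ i₀ ∧ (g ∩ V i).Nonempty) with hRdef
  set F₂ : Finset (Finset (Fin n)) :=
    G.filter (fun g => z ∈ g ∧ g ∩ V i₀ ⊆ U₀ ∧ ∀ i, i ≠ i₀ → g ∩ V i = ∅) with hF₂def
  set F₃ : Finset (Finset (Fin n)) :=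
    G.filter (fun g => z ∈ g ∧ ¬ (g ∩ V i₀ ⊆ U₀)) with hF₃def
  -- key claim: R has at least m elements
  have hR : m ≤ R.card := by
    by_contra hcon
    push_neg at hcon
    -- choice of a witness pair for each member of R
    have hfex : ∀ g, g ∈ R → ∃ p : Fin k × Fin n, p.1 ≠ i₀ ∧ p.2 ∈ g ∧ p.2 ∈ V p.1 := by
      intro g hg
      obtain ⟨-, -, -, i, hi, y, hy⟩ := Finset.mem_filter.mp hg
      exact ⟨(i, y), hi, (Finset.mem_inter.mp hy).1, (Finset.mem_inter.mp hy).2⟩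
    set f : Finset (Fin n) → Fin k × Fin n := fun g =>
      if h : ∃ p : Fin k × Fin n, p.1 ≠ i₀ ∧ p.2 ∈ g ∧ p.2 ∈ V p.1 then h.choose
      else (i₀, z) with hfdef
    have hf : ∀ g ∈ R, (f g).1 ≠ i₀ ∧ (f g).2 ∈ g ∧ (f g).2 ∈ V (f g).1 := by
      intro g hg
      have h := hfex g hg
      simp only [hfdef, dif_pos h]
      exact h.choose_spec
    -- blocked points
    set B : Fin k → Finset (Fin n) := fun i =>
      (R.filter (fun g => (f g).1 = i)).image (fun g => (f g).2) with hBdef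
    have hBcard : ∀ i, i ≠ i₀ → (B i).card < (V i).card := by
      intro i hi
      calc (B i).card ≤ (R.filter (fun g => (f g).1 = i)).card := Finset.card_image_le
        _ ≤ R.card := Finset.card_filter_le _ _
        _ < m := hcon
        _ ≤ (V i).card := hm1 i hi
    have hxex : ∀ i, i ≠ i₀ → ∃ a, a ∈ V i ∧ a ∉ B i := by
      intro i hi
      by_contra hno
      push_neg at hno
      exact absurd (Finset.card_le_card (fun a ha => hno a ha)) (not_le.mpr (hBcard i hi))
    set x : Fin k → Fin n := fun i =>
      if h : ∃ a, a ∈ V i ∧ a ∉ B i then h.choose else (hne i).choose with hxdef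
    have hx1 : ∀ i, x i ∈ V i := by
      intro i
      simp only [hxdef]
      split_ifs with h
      · exact h.choose_spec.1
      · exact (hne i).choose_spec
    have hx2 : ∀ i, i ≠ i₀ → x i ∉ B i := by
      intro i hi
      have h := hxex i hi
      simp only [hxdef, dif_pos h]
      exact h.choose_spec.2
    -- the test set
    set X : Finset (Fin n) := insert z (U₀ ∪ (Finset.univ.erase i₀).image x) with hXdef
    have hzX : z ∈ X := Finset.mem_insert_self _ _
    have hU₀X : U₀ ⊆ X := fun a ha =>
      Finset.mem_insert_of_mem (Finset.mem_union_left _ ha)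
    have hXi₀ : X ∩ V i₀ = U₀ := by
      apply Finset.Subset.antisymm
      · intro a ha
        obtain ⟨haX, haV⟩ := Finset.mem_inter.mp ha
        rcases Finset.mem_insert.mp haX with rfl | haU
        · exact absurd haV (hzV i₀)
        rcases Finset.mem_union.mp haU with h1 | h2
        · exact h1
        · obtain ⟨i', hi', rfl⟩ := Finset.mem_image.mp h2
          exact ((hdisj' i' i₀ (Finset.mem_erase.mp hi').1 _ (hx1 i') haV)).elim
      · intro a ha
        exact Finset.mem_inter.mpr ⟨hU₀X ha, hU₀sub ha⟩
    have hXi : ∀ i, i ≠ i₀ → X ∩ V i = {x i} := by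
      intro i hi
      apply Finset.Subset.antisymm
      · intro a ha
        obtain ⟨haX, haV⟩ := Finset.mem_inter.mp ha
        rcases Finset.mem_insert.mp haX with rfl | haU
        · exact absurd haV (hzV i)
        rcases Finset.mem_union.mp haU with h1 | h2
        · exact ((hdisj' i₀ i (Ne.symm hi) _ (hU₀sub h1) haV)).elim
        · obtain ⟨i', hi', rfl⟩ := Finset.mem_image.mp h2
          by_cases hii : i' = i
          · subst hii; exact Finset.mem_singleton_self _
          · exact ((hdisj' i' i hii _ (hx1 i') haV)).elim
      · intro a ha
        rw [Finset.mem_singleton] at ha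
        subst ha
        refine Finset.mem_inter.mpr ⟨Finset.mem_insert_of_mem (Finset.mem_union_right _ ?_),
          hx1 i⟩
        exact Finset.mem_image.mpr ⟨i, Finset.mem_erase.mpr ⟨hi, Finset.mem_univ i⟩, rfl⟩
    -- decompose X
    obtain ⟨S, hSG, hSk, hSdisj, hSX⟩ := hGgen X ⟨z, hzX⟩
    obtain ⟨g, hgS, hzg⟩ := Finset.mem_sup.mp (hSX ▸ hzX)
    have hgG : g ∈ G := hSG hgS
    have hgX : g ⊆ X := by
      have h := Finset.le_sup (f := id) hgS
      rw [← hSX] at h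
      exact h
    have htr : g ∩ V i₀ ⊆ U₀ := by
      rw [← hXi₀]
      exact Finset.inter_subset_inter hgX (Finset.Subset.refl _)
    -- for points of X outside g, find their containing part of the decomposition
    have hmemX : ∀ a, a ∈ X → a ∉ g → ∃ t, t ∈ S ∧ a ∈ t ∧ t ≠ g ∧ ∃ ℓ, t ⊆ V ℓ := by
      intro a haX hag
      obtain ⟨t, htS, hat⟩ := Finset.mem_sup.mp (hSX ▸ haX)
      have htg : t ≠ g := fun h => hag (h ▸ hat)
      have hzt : z ∉ t := by
        intro hzt
        exact Finset.disjoint_left.mp (hSdisj htS hgS htg) hzt hzg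
      exact ⟨t, htS, hat, htg, hsub t (hSG htS) hzt⟩
    -- key: g meets some part other than i₀
    have key : ∃ i, i ≠ i₀ ∧ (g ∩ V i).Nonempty := by
      by_cases hA : U₀ ⊆ g
      · by_contra hno
        push_neg at hno
        apply hU₀G
        have hgeq : g = insert z U₀ := by
          apply Finset.Subset.antisymm
          · intro a ha
            rcases Finset.mem_insert.mp (hgX ha) with rfl | haU
            · exact Finset.mem_insert_self _ _
            rcases Finset.mem_union.mp haU with h1 | h2
            · exact Finset.mem_insert_of_mem h1
            · obtain ⟨i', hi', rfl⟩ := Finset.mem_image.mp h2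
              have hii₀ : i' ≠ i₀ := (Finset.mem_erase.mp hi').1
              exact ((Finset.not_nonempty_iff_eq_empty.mpr (hno i' hii₀)) ⟨x i', Finset.mem_inter.mpr ⟨ha, hx1 i'⟩⟩).elim
          · intro a ha
            rcases Finset.mem_insert.mp ha with rfl | haU
            · exact hzg
            · exact hA haU
        rw [← hgeq]
        exact hgG
      · obtain ⟨u, huU, hug⟩ := Finset.not_subset.mp hA
        obtain ⟨tu, htuS, hutu, htug, ℓu, htuV⟩ := hmemX u (hU₀X huU) hug
        have htuVi₀ : tu ⊆ V i₀ := by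
          have : ℓu = i₀ := by
            by_contra hℓ
            exact hdisj' ℓu i₀ hℓ u (htuV hutu) (hU₀sub huU)
          rwa [this] at htuV
        set D : Finset (Fin k) := (Finset.univ.erase i₀).filter (fun i => x i ∉ g) with hDdef
        -- for each i in D, a part of the decomposition inside V i
        have hψex : ∀ i, i ∈ D → ∃ t, t ∈ S ∧ x i ∈ t ∧ t ≠ g ∧ t ⊆ V i := by
          intro i hiD
          obtain ⟨hi_er, hxig⟩ := Finset.mem_filter.mp hiD
          have hii₀ : i ≠ i₀ := (Finset.mem_erase.mp hi_er).1
          have hxiX : x i ∈ X := by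
            refine Finset.mem_insert_of_mem (Finset.mem_union_right _ ?_)
            exact Finset.mem_image.mpr ⟨i, hi_er, rfl⟩
          obtain ⟨t, htS, hxt, htg, ℓ, htV⟩ := hmemX (x i) hxiX hxig
          have : ℓ = i := by
            by_contra hℓ
            exact hdisj' ℓ i hℓ (x i) (htV hxt) (hx1 i)
          exact ⟨t, htS, hxt, htg, this ▸ htV⟩
        set ψ : Fin k → Finset (Fin n) := fun i =>
          if h : ∃ t, t ∈ S ∧ x i ∈ t ∧ t ≠ g ∧ t ⊆ V i then h.choose else ∅ with hψdef
        have hψ : ∀ i ∈ D, ψ i ∈ S ∧ x i ∈ ψ i ∧ ψ i ≠ g ∧ ψ i ⊆ V i := by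
          intro i hiD
          have h := hψex i hiD
          simp only [hψdef, dif_pos h]
          exact h.choose_spec
        -- count
        have hsubS : insert g (insert tu (D.image ψ)) ⊆ S := by
          intro t ht
          rcases Finset.mem_insert.mp ht with rfl | ht
          · exact hgS
          rcases Finset.mem_insert.mp ht with rfl | ht
          · exact htuS
          obtain ⟨i, hiD, rfl⟩ := Finset.mem_image.mp ht
          exact (hψ i hiD).1
        have himcard : (D.image ψ).card = D.card := by
          apply Finset.card_image_of_injOn
          intro i hi i' hi' heq
          have h1 := hψ i hi
          have h2 := hψ i' hi'
          by_contra hii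
          exact hdisj' i i' hii (x i) (h1.2.2.2 h1.2.1) (h2.2.2.2 (heq ▸ h1.2.1))
        have htunotmem : tu ∉ D.image ψ := by
          intro htu
          obtain ⟨i, hiD, heq⟩ := Finset.mem_image.mp htu
          have h1 := hψ i hiD
          have hii₀ : i ≠ i₀ := (Finset.mem_erase.mp (Finset.mem_filter.mp hiD).1).1
          exact hdisj' i i₀ hii₀ (x i) (h1.2.2.2 h1.2.1) (htuVi₀ (heq ▸ h1.2.1))
        have hgnotmem : g ∉ insert tu (D.image ψ) := by
          intro hg
          rcases Finset.mem_insert.mp hg with heq | hg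
          · exact htug heq.symm
          · obtain ⟨i, hiD, heq⟩ := Finset.mem_image.mp hg
            exact (hψ i hiD).2.2.1 heq
        have hcardS : D.card + 2 ≤ S.card := by
          have h1 : (insert g (insert tu (D.image ψ))).card = D.card + 2 := by
            rw [Finset.card_insert_of_notMem hgnotmem,
              Finset.card_insert_of_notMem htunotmem, himcard]
          calc D.card + 2 = (insert g (insert tu (D.image ψ))).card := h1.symm
            _ ≤ S.card := Finset.card_le_card hsubS
        have hDcard : D.card < (Finset.univ.erase i₀).card := by
          have h1 : (Finset.univ.erase i₀).card = k - 1 := by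
            rw [Finset.card_erase_of_mem (Finset.mem_univ i₀), Finset.card_univ,
              Fintype.card_fin]
          have h2 : D.card + 2 ≤ k := le_trans hcardS hSk
          omega
        obtain ⟨i, hi_er, hinD⟩ : ∃ i ∈ (Finset.univ.erase i₀), i ∉ D := by
          by_contra hcon2
          push_neg at hcon2
          exact absurd (Finset.card_le_card (fun a ha => hcon2 a ha)) (not_le.mpr hDcard)
        have hii₀ : i ≠ i₀ := (Finset.mem_erase.mp hi_er).1
        have hxig : x i ∈ g := by
          by_contra hxig
          exact hinD (Finset.mem_filter.mpr ⟨hi_er, hxig⟩)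
        exact ⟨i, hii₀, ⟨x i, Finset.mem_inter.mpr ⟨hxig, hx1 i⟩⟩⟩
    -- g belongs to R, contradicting the avoidance of blocked points
    have hgR : g ∈ R := Finset.mem_filter.mpr ⟨hgG, hzg, htr, key⟩
    obtain ⟨hf1, hf2, hf3⟩ := hf g hgR
    have hfX : (f g).2 ∈ X ∩ V (f g).1 := Finset.mem_inter.mpr ⟨hgX hf2, hf3⟩
    rw [hXi _ hf1, Finset.mem_singleton] at hfX
    have hfB : (f g).2 ∈ B (f g).1 := by
      rw [hBdef]
      exact Finset.mem_image.mpr ⟨g, Finset.mem_filter.mpr ⟨hgR, rfl⟩, rfl⟩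
    rw [hfX] at hfB
    exact hx2 _ hf1 hfB
  -- cardinalities of F₂ and F₃ via trace surjections
  have hF₂ : 2 ^ U₀.card - 1 ≤ F₂.card := by
    have hs : Set.SurjOn (fun g => g ∩ V i₀) ↑F₂ ↑(U₀.powerset.erase U₀) := by
      intro A hA
      rw [Finset.coe_erase, Set.mem_diff, Finset.mem_coe, Finset.mem_powerset] at hA
      have hAss : A ⊂ U₀ := by
        refine Finset.ssubset_iff_subset_ne.mpr ⟨hA.1, ?_⟩
        simpa using hA.2
      have hAG : insert z A ∈ G := hmin A hAss
      have hzA : z ∉ A := fun h => hzV i₀ (hU₀sub (hA.1 h))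
      have htrA : insert z A ∩ V i₀ = A := by
        apply Finset.Subset.antisymm
        · intro a ha
          obtain ⟨haX, haV⟩ := Finset.mem_inter.mp ha
          rcases Finset.mem_insert.mp haX with rfl | h
          · exact absurd haV (hzV i₀)
          · exact h
        · intro a ha
          exact Finset.mem_inter.mpr ⟨Finset.mem_insert_of_mem ha, hU₀sub (hA.1 ha)⟩
      refine ⟨insert z A, ?_, htrA⟩
      rw [Finset.mem_coe, hF₂def, Finset.mem_filter]
      refine ⟨hAG, Finset.mem_insert_self _ _, by rw [htrA]; exact hA.1, ?_⟩
      intro i hi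
      apply Finset.eq_empty_of_forall_notMem
      intro a ha
      obtain ⟨haX, haV⟩ := Finset.mem_inter.mp ha
      rcases Finset.mem_insert.mp haX with rfl | h
      · exact hzV i haV
      · exact hdisj' i₀ i (Ne.symm hi) a (hU₀sub (hA.1 h)) haV
    have := Finset.card_le_card_of_surjOn _ hs
    rwa [Finset.card_erase_of_mem (Finset.mem_powerset.mpr (Finset.Subset.refl _)),
      Finset.card_powerset] at this
  have hF₃ : 2 ^ (V i₀).card - 2 ^ U₀.card ≤ F₃.card := by
    have hs : Set.SurjOn (fun g => g ∩ V i₀) ↑F₃ ↑((V i₀).powerset \ U₀.powerset) := by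
      intro A hA
      rw [Finset.coe_sdiff, Set.mem_diff, Finset.mem_coe, Finset.mem_coe,
        Finset.mem_powerset, Finset.mem_powerset] at hA
      obtain ⟨g, hgG, hzg, htrA⟩ := hsees A hA.1
      refine ⟨g, ?_, htrA⟩
      rw [Finset.mem_coe, hF₃def, Finset.mem_filter]
      exact ⟨hgG, hzg, fun h => hA.2 (htrA ▸ h)⟩
    have := Finset.card_le_card_of_surjOn _ hs
    rwa [Finset.card_sdiff_of_subset (Finset.powerset_mono.mpr hU₀sub), Finset.card_powerset,
      Finset.card_powerset] at this
  -- disjointness and final count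
  have hd1 : Disjoint R F₂ := by
    rw [Finset.disjoint_left]
    intro g hgR hgF₂
    obtain ⟨-, -, -, i, hi, hne'⟩ := Finset.mem_filter.mp hgR
    obtain ⟨-, -, -, hall⟩ := Finset.mem_filter.mp hgF₂
    rw [hall i hi] at hne'
    exact Finset.not_nonempty_empty hne'
  have hd2 : Disjoint (R ∪ F₂) F₃ := by
    rw [Finset.disjoint_left]
    intro g hg hgF₃
    obtain ⟨-, -, hnsub⟩ := Finset.mem_filter.mp hgF₃
    rcases Finset.mem_union.mp hg with h | h
    · exact hnsub (Finset.mem_filter.mp h).2.2.1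
    · exact hnsub (Finset.mem_filter.mp h).2.2.1
  have hsubGz : R ∪ F₂ ∪ F₃ ⊆ G.filter (fun g => z ∈ g) := by
    intro g hg
    rcases Finset.mem_union.mp hg with h | h
    · rcases Finset.mem_union.mp h with h' | h'
      · exact Finset.mem_filter.mpr ⟨(Finset.mem_filter.mp h').1,
          (Finset.mem_filter.mp h').2.1⟩
      · exact Finset.mem_filter.mpr ⟨(Finset.mem_filter.mp h').1,
          (Finset.mem_filter.mp h').2.1⟩
    · exact Finset.mem_filter.mpr ⟨(Finset.mem_filter.mp h).1,
        (Finset.mem_filter.mp h).2.1⟩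
  have hcards : R.card + F₂.card + F₃.card ≤ (G.filter (fun g => z ∈ g)).card := by
    calc R.card + F₂.card + F₃.card = (R ∪ F₂).card + F₃.card := by
          rw [Finset.card_union_of_disjoint hd1]
      _ = (R ∪ F₂ ∪ F₃).card := (Finset.card_union_of_disjoint hd2).symm
      _ ≤ _ := Finset.card_le_card hsubGz
  have hle : 2 ^ U₀.card ≤ 2 ^ (V i₀).card :=
    Nat.pow_le_pow_right (by norm_num) (Finset.card_le_card hU₀sub)
  have h1 : 1 ≤ 2 ^ U₀.card := Nat.one_le_two_pow
  omega
end

section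
/- If k < n ≤ 2k and G consists of all n singletons of [n] together with n − k pairwise disjoint subsets of [n] each of size at least 2, then G is an (n,k)-generator. -/
theorem stmt12 (n k : ℕ) (h1 : k < n) (h2 : n ≤ 2 * k)
    (D : Finset (Finset (Fin n))) (hD : D.card = n - k)
    (hsize : ∀ g ∈ D, 2 ≤ g.card)
    (hdisj : (D : Set (Finset (Fin n))).Pairwise Disjoint) :
    IsGenerator n k
      ((Finset.univ.image fun i : Fin n => ({i} : Finset (Fin n))) ∪ D) := by
  constructor
  · intro g hg
    rw [Finset.mem_union] at hg
    rcases hg with hg | hg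
    · simp only [Finset.mem_image] at hg
      obtain ⟨i, -, rfl⟩ := hg
      exact ⟨i, Finset.mem_singleton_self i⟩
    · have := hsize g hg
      exact Finset.card_pos.mp (by omega)
  · intro X hX
    by_cases hXk : X.card ≤ k
    · refine ⟨X.image fun i => {i}, ?_, ?_, ?_, ?_⟩
      · intro s hs
        simp only [Finset.mem_image] at hs
        obtain ⟨i, -, rfl⟩ := hs
        exact Finset.mem_union_left _ (Finset.mem_image_of_mem _ (Finset.mem_univ i))
      · exact le_trans Finset.card_image_le hXk
      · intro a ha b hb hab
        simp only [Finset.coe_image, Set.mem_image] at ha hb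
        obtain ⟨i, -, rfl⟩ := ha
        obtain ⟨j, -, rfl⟩ := hb
        simp only [ne_eq, Finset.singleton_inj] at hab
        exact Finset.disjoint_singleton.mpr hab
      · ext x
        simp [Finset.mem_sup]
    · push_neg at hXk
      set T := D.filter (fun d => d ⊆ X) with hT
      set Y := X \ T.sup id with hY
      have hTD : T ⊆ D := Finset.filter_subset _ _
      have hTdisj : (T : Set (Finset (Fin n))).Pairwise Disjoint :=
        hdisj.mono (by exact_mod_cast hTD)
      have hTsubX : T.sup id ⊆ X := by
        intro x hx
        rw [Finset.mem_sup] at hx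
        obtain ⟨d, hd, hx⟩ := hx
        exact (Finset.mem_filter.mp hd).2 hx
      have hcardY : Y.card = X.card - (T.sup id).card := Finset.card_sdiff_of_subset hTsubX
      have hsupbi : T.sup id = T.biUnion id := Finset.sup_eq_biUnion T id
      have hcardsup : (T.sup id).card = ∑ d ∈ T, d.card := by
        rw [hsupbi]
        exact Finset.card_biUnion fun x hx y hy hxy => hTdisj hx hy hxy
      have hsumge : 2 * T.card ≤ ∑ d ∈ T, d.card := by
        calc 2 * T.card = ∑ _d ∈ T, 2 := by rw [Finset.sum_const, smul_eq_mul, mul_comm]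
        _ ≤ ∑ d ∈ T, d.card := Finset.sum_le_sum fun d hd => hsize d (hTD hd)
      -- bound on D \ T
      have hDTdisj : ∀ x ∈ D \ T, ∀ y ∈ D \ T, x ≠ y →
          Disjoint (x \ X) (y \ X) := by
        intro x hx y hy hxy
        exact (hdisj (Finset.mem_sdiff.mp hx).1 (Finset.mem_sdiff.mp hy).1 hxy).mono
          Finset.sdiff_subset Finset.sdiff_subset
      have hDTcard : (D \ T).card ≤ n - X.card := by
        have h1' : ∀ d ∈ D \ T, (d \ X).Nonempty := by
          intro d hd
          rw [Finset.mem_sdiff, hT, Finset.mem_filter] at hd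
          rcases Finset.sdiff_nonempty.mpr (fun hsub => hd.2 ⟨hd.1, hsub⟩) with h
          exact h
        have hbU : ((D \ T).biUnion (fun d => d \ X)).card = ∑ d ∈ D \ T, (d \ X).card :=
          Finset.card_biUnion hDTdisj
        have hge : (D \ T).card ≤ ∑ d ∈ D \ T, (d \ X).card := by
          calc (D \ T).card = ∑ _d ∈ D \ T, 1 := by simp
          _ ≤ _ := Finset.sum_le_sum fun d hd => Finset.card_pos.mpr (h1' d hd)
        have hsub : (D \ T).biUnion (fun d => d \ X) ⊆ Finset.univ \ X := by
          intro x hx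
          simp only [Finset.mem_biUnion, Finset.mem_sdiff] at hx ⊢
          obtain ⟨d, -, -, hxX⟩ := hx
          exact ⟨Finset.mem_univ x, hxX⟩
        have hcanc : (Finset.univ \ X : Finset (Fin n)).card = n - X.card := by
          rw [Finset.card_sdiff_of_subset (Finset.subset_univ X), Finset.card_univ, Fintype.card_fin]
        calc (D \ T).card ≤ ((D \ T).biUnion (fun d => d \ X)).card := by rw [hbU]; exact hge
        _ ≤ (Finset.univ \ X : Finset (Fin n)).card := Finset.card_le_card hsub
        _ = n - X.card := hcanc
      have hDcard : T.card + (D \ T).card = n - k := by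
        rw [Finset.card_sdiff_of_subset hTD, ← hD]
        have := Finset.card_le_card hTD
        omega
      have hXn : X.card ≤ n := by simpa using Finset.card_le_univ X
      have hsupX : (T.sup id).card ≤ X.card := Finset.card_le_card hTsubX
      refine ⟨T ∪ Y.image (fun i => ({i} : Finset (Fin n))), ?_, ?_, ?_, ?_⟩
      · intro s hs
        rw [Finset.mem_union] at hs
        rcases hs with hs | hs
        · exact Finset.mem_union_right _ (hTD hs)
        · simp only [Finset.mem_image] at hs
          obtain ⟨i, -, rfl⟩ := hs
          exact Finset.mem_union_left _ (Finset.mem_image_of_mem _ (Finset.mem_univ i))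
      · have hc1 : (T ∪ Y.image (fun i => ({i} : Finset (Fin n)))).card ≤
            T.card + Y.card :=
          le_trans (Finset.card_union_le _ _) (by gcongr; exact Finset.card_image_le)
        omega
      · intro a ha b hb hab
        simp only [Finset.coe_union, Set.mem_union, Finset.coe_image, Set.mem_image,
          Finset.mem_coe] at ha hb
        rcases ha with ha | ⟨i, hi, rfl⟩
        · rcases hb with hb | ⟨j, hj, rfl⟩
          · exact hTdisj ha hb hab
          · have hiX : j ∉ T.sup id := (Finset.mem_sdiff.mp hj).2
            have : a ⊆ T.sup id := Finset.le_sup (f := id) ha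
            rw [Finset.disjoint_singleton_right]
            exact fun hj' => hiX (this hj')
        · rcases hb with hb | ⟨j, hj, rfl⟩
          · have hiX : i ∉ T.sup id := (Finset.mem_sdiff.mp hi).2
            have : b ⊆ T.sup id := Finset.le_sup (f := id) hb
            rw [Finset.disjoint_singleton_left]
            exact fun hi' => hiX (this hi')
          · simp only [ne_eq, Finset.singleton_inj] at hab
            simp only [Finset.disjoint_singleton_left, Finset.mem_singleton]
            exact fun h => hab h
      · have himg : (Y.image (fun i => ({i} : Finset (Fin n)))).sup id = Y := by
          ext x
          simp [Finset.mem_sup]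
        rw [Finset.sup_union, himg]
        have : T.sup id ⊔ Y = T.sup id ∪ Y := rfl
        rw [this, hY, Finset.union_sdiff_of_subset hTsubX]
end

section
/- If k < n ≤ 2k, then every (n,k)-generator has size at least n + (n − k), i.e., opt(n,k) = 2n − k = constr(n,k); moreover a generator achieves this bound if and only if it consists of all singletons of [n] together with n − k pairwise disjoint sets of size at least 2. -/
lemma gen_singleton {n k : ℕ} {G : Finset (Finset (Fin n))} (hG : IsGenerator n k G)
    (i : Fin n) : ({i} : Finset (Fin n)) ∈ G := by
  obtain ⟨S, hSG, -, -, hX⟩ := hG.2 {i} ⟨i, Finset.mem_singleton_self i⟩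
  have hSne : S.Nonempty := by
    rcases S.eq_empty_or_nonempty with rfl | h
    · simp at hX
    · exact h
  obtain ⟨s, hs⟩ := hSne
  have hsub : s ⊆ ({i} : Finset (Fin n)) := by
    have := Finset.le_sup (f := id) hs
    rw [← hX] at this; exact this
  have hne : s.Nonempty := hG.1 s (hSG hs)
  have : s = {i} := by
    apply Finset.Subset.antisymm hsub
    obtain ⟨x, hx⟩ := hne
    have := hsub hx
    simp only [Finset.mem_singleton] at this
    subst this
    simpa using hx
  exact this ▸ hSG hs

lemma hitting_card {n k : ℕ} {G : Finset (Finset (Fin n))} (hG : IsGenerator n k G)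
    (T : Finset (Fin n)) (hT : ∀ g ∈ G, 2 ≤ g.card → (g ∩ T).Nonempty) :
    n ≤ k + T.card := by
  by_contra h
  push_neg at h
  have hc : k + 1 ≤ Tᶜ.card := by
    rw [Finset.card_compl]
    simp only [Fintype.card_fin]
    omega
  obtain ⟨X, hXsub, hXcard⟩ := Finset.exists_subset_card_eq hc
  have hXne : X.Nonempty := Finset.card_pos.mp (by omega)
  obtain ⟨S, hSG, hSk, hdisj, hX⟩ := hG.2 X hXne
  have hone : ∀ s ∈ S, s.card = 1 := by
    intro s hs
    have hsub : s ⊆ X := by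
      have := Finset.le_sup (f := id) hs
      rw [← hX] at this; exact this
    have hne : s.Nonempty := hG.1 s (hSG hs)
    have h2 : ¬ 2 ≤ s.card := by
      intro h2
      obtain ⟨x, hx⟩ := hT s (hSG hs) h2
      rw [Finset.mem_inter] at hx
      have := hXsub (hsub hx.1)
      simp only [Finset.mem_compl] at this
      exact this hx.2
    have := Finset.card_pos.mpr hne
    omega
  have hcard : X.card = S.card := by
    rw [hX, Finset.sup_eq_biUnion, Finset.card_biUnion]
    · simp only [id]
      rw [Finset.sum_congr rfl hone, Finset.sum_const, smul_eq_mul, mul_one]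
    · intro x hx y hy hxy
      exact hdisj hx hy hxy
  omega

theorem stmt13 (n k : ℕ) (h1 : k < n) (h2 : n ≤ 2 * k) :
    (∀ G : Finset (Finset (Fin n)), IsGenerator n k G → 2 * n - k ≤ G.card) ∧
    (∀ G : Finset (Finset (Fin n)), IsGenerator n k G →
      (G.card = 2 * n - k ↔
        ∃ D : Finset (Finset (Fin n)), D.card = n - k ∧
          (∀ g ∈ D, 2 ≤ g.card) ∧
          (D : Set (Finset (Fin n))).Pairwise Disjoint ∧
          G = (Finset.univ.image fun i : Fin n => ({i} : Finset (Fin n))) ∪ D)) := by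
  set Sing : Finset (Finset (Fin n)) :=
    Finset.univ.image fun i : Fin n => ({i} : Finset (Fin n)) with hSingdef
  have hSingcard : Sing.card = n := by
    rw [hSingdef, Finset.card_image_of_injective _ (fun a b h => Finset.singleton_injective h),
      Finset.card_univ, Fintype.card_fin]
  have hSingmem : ∀ g ∈ Sing, g.card = 1 := by
    intro g hg
    rw [hSingdef] at hg
    simp only [Finset.mem_image] at hg
    obtain ⟨i, -, rfl⟩ := hg
    simp
  -- pick function
  set pick : Finset (Fin n) → Fin n :=
    fun g => if h : g.Nonempty then g.min' h else (⟨0, by omega⟩ : Fin n) with hpickdef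
  have hpickmem : ∀ g : Finset (Fin n), g.Nonempty → pick g ∈ g := by
    intro g hg
    rw [hpickdef]
    simp only [dif_pos hg]
    exact g.min' hg |>.2 |> fun _ => g.min'_mem hg
  -- common facts for any generator
  have main : ∀ G : Finset (Finset (Fin n)), IsGenerator n k G →
      Sing ∪ G.filter (fun g => 2 ≤ g.card) ⊆ G ∧
      (Sing ∪ G.filter (fun g => 2 ≤ g.card)).card
        = n + (G.filter (fun g => 2 ≤ g.card)).card ∧
      n ≤ k + (G.filter (fun g => 2 ≤ g.card)).card := by
    intro G hG
    set D := G.filter (fun g => 2 ≤ g.card) with hDdef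
    have hDsub : D ⊆ G := Finset.filter_subset _ _
    have hSingsub : Sing ⊆ G := by
      intro g hg
      rw [hSingdef] at hg
      simp only [Finset.mem_image] at hg
      obtain ⟨i, -, rfl⟩ := hg
      exact gen_singleton hG i
    have hdisjSD : Disjoint Sing D := by
      rw [Finset.disjoint_left]
      intro g hg hgD
      have := hSingmem g hg
      rw [hDdef, Finset.mem_filter] at hgD
      omega
    refine ⟨Finset.union_subset hSingsub hDsub, ?_, ?_⟩
    · rw [Finset.card_union_of_disjoint hdisjSD, hSingcard]
    · -- transversal
      have := hitting_card hG (D.image pick) ?_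
      · have hle := Finset.card_image_le (s := D) (f := pick)
        omega
      · intro g hgG hg2
        have hgD : g ∈ D := by rw [hDdef, Finset.mem_filter]; exact ⟨hgG, hg2⟩
        have hgne : g.Nonempty := Finset.card_pos.mp (by omega)
        exact ⟨pick g, Finset.mem_inter.mpr ⟨hpickmem g hgne,
          Finset.mem_image_of_mem pick hgD⟩⟩
  constructor
  · intro G hG
    obtain ⟨hsub, hcardU, hDge⟩ := main G hG
    have := Finset.card_le_card hsub
    omega
  · intro G hG
    obtain ⟨hsub, hcardU, hDge⟩ := main G hG
    set D := G.filter (fun g => 2 ≤ g.card) with hDdef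
    constructor
    · intro hcard
      have hGle := Finset.card_le_card hsub
      have hDcard : D.card = n - k := by omega
      have hGeq : G = Sing ∪ D := by
        refine (Finset.eq_of_subset_of_card_le hsub ?_).symm
        omega
      refine ⟨D, hDcard, fun g hg => (Finset.mem_filter.mp hg).2, ?_, hGeq⟩
      -- pairwise disjoint
      intro a ha b hb hab
      by_contra hnd
      obtain ⟨x, hxa, hxb⟩ := Finset.not_disjoint_iff.mp hnd
      have haD : a ∈ D := ha
      have hbD : b ∈ D := hb
      have habsub : ({a, b} : Finset (Finset (Fin n))) ⊆ D := by
        intro t ht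
        simp only [Finset.mem_insert, Finset.mem_singleton] at ht
        rcases ht with rfl | rfl <;> assumption
      have habcard : ({a, b} : Finset (Finset (Fin n))).card = 2 := by
        rw [Finset.card_insert_of_notMem (by simpa using hab), Finset.card_singleton]
      have hD2 : 2 ≤ D.card := habcard ▸ Finset.card_le_card habsub
      set T : Finset (Fin n) := insert x ((D \ {a, b}).image pick) with hTdef
      have hTcard : T.card ≤ D.card - 1 := by
        have h3 := Finset.card_image_le (s := D \ ({a, b} : Finset (Finset (Fin n)))) (f := pick)
        have h4 : (D \ ({a, b} : Finset (Finset (Fin n)))).card = D.card - 2 := by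
          rw [Finset.card_sdiff_of_subset habsub, habcard]
        have h5 := Finset.card_insert_le x ((D \ ({a, b} : Finset (Finset (Fin n)))).image pick)
        rw [hTdef]
        omega
      have hhit := hitting_card hG T ?_
      · omega
      · intro g hgG hg2
        have hgD : g ∈ D := by rw [hDdef, Finset.mem_filter]; exact ⟨hgG, hg2⟩
        by_cases hga : g = a
        · exact ⟨x, Finset.mem_inter.mpr ⟨hga ▸ hxa, Finset.mem_insert_self x _⟩⟩
        by_cases hgb : g = b
        · exact ⟨x, Finset.mem_inter.mpr ⟨hgb ▸ hxb, Finset.mem_insert_self x _⟩⟩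
        have hgmem : g ∈ D \ ({a, b} : Finset (Finset (Fin n))) := by
          rw [Finset.mem_sdiff]
          refine ⟨hgD, ?_⟩
          simp only [Finset.mem_insert, Finset.mem_singleton]
          tauto
        have hgne : g.Nonempty := Finset.card_pos.mp (by omega)
        exact ⟨pick g, Finset.mem_inter.mpr ⟨hpickmem g hgne,
          Finset.mem_insert_of_mem (Finset.mem_image_of_mem pick hgmem)⟩⟩
    · rintro ⟨D', hD'card, hD'2, -, rfl⟩
      have hdisj : Disjoint Sing D' := by
        rw [Finset.disjoint_left]
        intro g hg hgD
        have := hSingmem g hg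
        have := hD'2 g hgD
        omega
      rw [Finset.card_union_of_disjoint hdisj, hSingcard, hD'card]
      omega
end

section
/- For every (n,2)-generator G and every z ∈ [n], we have |G(z)| · (|G − z| + 1) ≥ 2^{n-1}, where G(z) = {g ∈ G : z ∈ g} and G − z = {g ∈ G : z ∉ g}. -/
theorem stmt16 (n : ℕ) (G : Finset (Finset (Fin n))) (hG : IsGenerator n 2 G)
    (z : Fin n) :
    2 ^ (n - 1) ≤
      (G.filter fun g => z ∈ g).card * ((G.filter fun g => z ∉ g).card + 1) := by
  classical
  obtain ⟨hne, hgen⟩ := hG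
  set A : Finset (Finset (Fin n)) := Finset.univ.filter (fun X => z ∈ X) with hA
  set B : Finset (Finset (Fin n) × Finset (Fin n)) :=
    (G.filter fun g => z ∈ g) ×ˢ (insert ∅ (G.filter fun g => z ∉ g)) with hB
  have hAcard : A.card = 2 ^ (n - 1) := by
    have : A.card = ((Finset.univ.erase z).powerset).card := by
      apply Finset.card_bij (fun X _ => X.erase z)
      · intro X hX
        simp only [Finset.mem_powerset]
        exact Finset.erase_subset_erase z (Finset.subset_univ X)
      · intro X hX Y hY h
        have hXz : z ∈ X := by simpa [hA] using hX
        have hYz : z ∈ Y := by simpa [hA] using hY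
        rw [← Finset.insert_erase hXz, ← Finset.insert_erase hYz, h]
      · intro Y hY
        refine ⟨insert z Y, ?_, ?_⟩
        · simp [hA]
        · have hzY : z ∉ Y := by
            intro h
            have := Finset.mem_powerset.mp hY h
            simp at this
          rw [Finset.erase_insert hzY]
    rw [this, Finset.card_powerset, Finset.card_erase_of_mem (Finset.mem_univ z)]
    simp
  have key : ∀ X : Finset (Fin n), ∃ p : Finset (Fin n) × Finset (Fin n),
      X ∈ A → p ∈ B ∧ X = p.1 ⊔ p.2 := by
    intro X
    by_cases hX : X ∈ A
    · have hzX : z ∈ X := by simpa [hA] using hX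
      obtain ⟨S, hSG, hScard, hSdisj, hXS⟩ := hgen X ⟨z, hzX⟩
      have hz' : ∃ g ∈ S, z ∈ id g := by
        rw [← Finset.mem_sup, ← hXS]; exact hzX
      obtain ⟨g, hgS, hzg⟩ := hz'
      refine ⟨(g, (S.erase g).sup id), fun _ => ⟨?_, ?_⟩⟩
      · simp only [hB, Finset.mem_product, Finset.mem_filter, Finset.mem_insert]
        refine ⟨⟨hSG hgS, hzg⟩, ?_⟩
        rcases Finset.eq_empty_or_nonempty (S.erase g) with hT | hT
        · left; simp [hT]
        · right
          have hTcard : (S.erase g).card = 1 := by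
            have h1 : (S.erase g).card = S.card - 1 := Finset.card_erase_of_mem hgS
            have h2 : 1 ≤ (S.erase g).card := Finset.one_le_card.mpr hT
            omega
          obtain ⟨h, hh⟩ := Finset.card_eq_one.mp hTcard
          have hhS : h ∈ S := Finset.mem_of_mem_erase (hh ▸ Finset.mem_singleton_self h)
          have hhg : h ≠ g := Finset.ne_of_mem_erase (hh ▸ Finset.mem_singleton_self h)
          have hdisj : Disjoint h g := hSdisj (Finset.mem_coe.mpr hhS) (Finset.mem_coe.mpr hgS) hhg
          rw [hh]
          simp only [Finset.sup_singleton, id]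
          have hmem : h ∈ G.filter (fun g => z ∉ g) :=
            Finset.mem_filter.mpr ⟨hSG hhS, fun hzh => (Finset.disjoint_left.mp hdisj hzh) hzg⟩
          exact Finset.mem_filter.mp hmem
      · have hs : S.sup id = id g ⊔ (S.erase g).sup id := by
          conv_lhs => rw [← Finset.insert_erase hgS]
          rw [Finset.sup_insert]
        rw [hXS, hs]
        rfl
    · exact ⟨(∅, ∅), fun h => absurd h hX⟩
  choose f hf using key
  have hle : A.card ≤ B.card := by
    apply Finset.card_le_card_of_injOn f (fun X hX => (hf X hX).1)
    intro X hX Y hY h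
    rw [(hf X hX).2, (hf Y hY).2, h]
  calc 2 ^ (n - 1) = A.card := hAcard.symm
    _ ≤ B.card := hle
    _ ≤ (G.filter fun g => z ∈ g).card * ((G.filter fun g => z ∉ g).card + 1) := by
        rw [hB, Finset.card_product]
        exact Nat.mul_le_mul_left _ (Finset.card_insert_le _ _)
end

section
/- The minimum size opt(n,2) of an (n,2)-generator satisfies opt(n,2) ≥ 2·2^{(n-1)/2} − 1 (with real exponent), and consequently constr(n,2) ≤ (3/2)·opt(n,2) for all n ≥ 1. -/
lemma gen_count {n : ℕ} {G : Finset (Finset (Fin n))} (hG : IsGenerator n 2 G) :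
    2 ^ n - 1 ≤ G.card + G.card.choose 2 := by
  classical
  set A : Finset (Finset (Fin n)) := Finset.univ.powerset.erase ∅ with hA
  have hAcard : A.card = 2 ^ n - 1 := by
    rw [hA, Finset.card_erase_of_mem (Finset.empty_mem_powerset _), Finset.card_powerset,
      Finset.card_univ, Fintype.card_fin]
  set T : Finset (Finset (Finset (Fin n))) :=
    (Finset.powersetCard 1 G) ∪ (Finset.powersetCard 2 G) with hT
  choose f hsub hcard hpair hsup using hG.2
  set g : Finset (Fin n) → Finset (Finset (Fin n)) :=
    fun X => if h : X.Nonempty then f X h else ∅ with hg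
  have hgsup : ∀ X : Finset (Fin n), X.Nonempty → X = (g X).sup id := by
    intro X hX
    simp only [hg, dif_pos hX]
    exact hsup X hX
  have hmemA : ∀ X ∈ A, X.Nonempty := by
    intro X hX
    rw [hA, Finset.mem_erase] at hX
    exact Finset.nonempty_iff_ne_empty.2 hX.1
  have hmaps : ∀ X ∈ A, g X ∈ T := by
    intro X hX
    have hXne := hmemA X hX
    have h1 : g X ⊆ G := by simp only [hg, dif_pos hXne]; exact hsub X hXne
    have h2 : (g X).card ≤ 2 := by simp only [hg, dif_pos hXne]; exact hcard X hXne
    have h3 : (g X).Nonempty := by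
      rw [Finset.nonempty_iff_ne_empty]
      intro h
      have := hgsup X hXne
      rw [h] at this
      simp at this
      exact Finset.nonempty_iff_ne_empty.1 hXne this
    have h4 : (g X).card = 1 ∨ (g X).card = 2 := by
      have := Finset.card_pos.2 h3
      omega
    rw [hT, Finset.mem_union, Finset.mem_powersetCard, Finset.mem_powersetCard]
    rcases h4 with h | h
    · exact Or.inl ⟨h1, h⟩
    · exact Or.inr ⟨h1, h⟩
  have hinj : Set.InjOn g A := by
    intro X1 h1 X2 h2 heq
    rw [hgsup X1 (hmemA X1 h1), hgsup X2 (hmemA X2 h2), heq]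
  have hle : A.card ≤ T.card := Finset.card_le_card_of_injOn g hmaps hinj
  have hTcard : T.card ≤ G.card + G.card.choose 2 := by
    calc T.card ≤ (Finset.powersetCard 1 G).card + (Finset.powersetCard 2 G).card :=
          Finset.card_union_le _ _
      _ = G.card.choose 1 + G.card.choose 2 := by
          rw [Finset.card_powersetCard, Finset.card_powersetCard]
      _ = G.card + G.card.choose 2 := by rw [Nat.choose_one_right]
  omega

lemma sq_bound {n m : ℕ} (hn : 1 ≤ n) (h : 2 ^ n - 1 ≤ m + m.choose 2) :
    2 ^ (n + 1) ≤ (m + 1) ^ 2 := by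
  have hp : 1 < 2 ^ n := Nat.one_lt_two_pow_iff.2 (by omega)
  have hm : 1 ≤ m := by
    by_contra h1
    interval_cases m
    · simp at h
      omega
  obtain ⟨k, rfl⟩ := Nat.exists_eq_add_of_le hm
  have h2 : 2 * (1 + k).choose 2 = (1 + k) * k := by
    rw [Nat.choose_two_right]
    have hd : 2 ∣ (1 + k) * k := by
      rcases Nat.even_or_odd k with he | he
      · exact Dvd.dvd.mul_left he.two_dvd _
      · rw [Nat.add_comm]; exact Dvd.dvd.mul_right (he.add_one).two_dvd _
    have : (1 + k) * (1 + k - 1) = (1 + k) * k := by congr 1; omega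
    rw [this, Nat.mul_div_cancel' hd]
  have h3 : 2 ^ n ≤ (1 + k) + (1 + k).choose 2 + 1 := by omega
  have h4 : 2 ^ (n + 1) = 2 * 2 ^ n := by ring
  nlinarith [h2, h3, h4]

lemma witness (n : ℕ) : ∃ G : Finset (Finset (Fin n)), IsGenerator n 2 G := by
  classical
  refine ⟨Finset.univ.filter (fun s => s ≠ ∅), ?_, ?_⟩
  · intro g hg
    rw [Finset.mem_filter] at hg
    exact Finset.nonempty_iff_ne_empty.2 hg.2
  · intro X hX
    refine ⟨{X}, ?_, by simp, by simp, by simp⟩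
    intro Y hY
    rw [Finset.mem_singleton] at hY
    subst hY
    simp [Finset.nonempty_iff_ne_empty.1 hX]

lemma opt_mem (n : ℕ) : ∃ G : Finset (Finset (Fin n)), IsGenerator n 2 G ∧ G.card = opt n 2 := by
  have hne : {m | ∃ G : Finset (Finset (Fin n)), IsGenerator n 2 G ∧ G.card = m}.Nonempty := by
    obtain ⟨G, hG⟩ := witness n
    exact ⟨G.card, G, hG, rfl⟩
  exact Nat.sInf_mem hne

lemma opt_sq (n : ℕ) (hn : 1 ≤ n) : 2 ^ (n + 1) ≤ (opt n 2 + 1) ^ 2 := by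
  obtain ⟨G, hG, hc⟩ := opt_mem n
  exact hc ▸ sq_bound hn (gen_count hG)

lemma opt_real (n : ℕ) (hn : 1 ≤ n) :
    2 * (2 : ℝ) ^ (((n : ℝ) - 1) / 2) - 1 ≤ (opt n 2 : ℝ) := by
  have h := opt_sq n hn
  set m := opt n 2 with hm
  have hcast : (2 : ℝ) ^ ((n : ℝ) + 1) ≤ ((m : ℝ) + 1) ^ 2 := by
    have h2 := (Nat.cast_le (α := ℝ)).2 h
    push_cast at h2
    rw [show ((n : ℝ) + 1) = ((n + 1 : ℕ) : ℝ) by push_cast; ring, Real.rpow_natCast]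
    exact_mod_cast h2
  set a : ℝ := (2 : ℝ) ^ (((n : ℝ) + 1) / 2) with ha
  have ha2 : a ^ 2 = (2 : ℝ) ^ ((n : ℝ) + 1) := by
    rw [ha, ← Real.rpow_natCast ((2:ℝ) ^ (((n:ℝ)+1)/2)) 2, ← Real.rpow_mul (by norm_num)]
    norm_num
  have hann : 0 ≤ a := Real.rpow_nonneg (by norm_num) _
  have hmnn : (0 : ℝ) ≤ (m : ℝ) + 1 := by positivity
  have hle : a ≤ (m : ℝ) + 1 := by nlinarith [hcast, ha2]
  have hsplit : a = 2 * (2 : ℝ) ^ (((n : ℝ) - 1) / 2) := by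
    rw [ha, show ((n : ℝ) + 1) / 2 = 1 + ((n : ℝ) - 1) / 2 by ring,
      Real.rpow_add (by norm_num), Real.rpow_one]
  linarith [hsplit ▸ hle]

lemma constr_real (n : ℕ) (hn : 1 ≤ n) :
    (constr n 2 : ℝ) ≤ 3 * (2 : ℝ) ^ (((n : ℝ) - 1) / 2) - 3 / 2 := by
  rcases Nat.even_or_odd n with ⟨q, hq⟩ | ⟨q, hq⟩
  · -- n = 2q, q ≥ 1
    subst hq
    have hq1 : 1 ≤ q := by omega
    have hp : pCeil (q + q) 2 = q := by unfold pCeil; omega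
    have hc : constr (q + q) 2 = 2 * (2 ^ q - 1) := by
      unfold constr
      rw [hp]
      have h0 : q * 2 - (q + q) = 0 := by omega
      rw [h0]
      simp
    rw [hc]
    have hcr : ((2 * (2 ^ q - 1) : ℕ) : ℝ) = 2 * (2 : ℝ) ^ q - 2 := by
      have : (1 : ℕ) ≤ 2 ^ q := Nat.one_le_two_pow
      push_cast [this]
      ring
    rw [hcr]
    have hexp : (((q + q : ℕ) : ℝ) - 1) / 2 = ((q - 1 : ℕ) : ℝ) + 1 / 2 := by
      have : ((q - 1 : ℕ) : ℝ) = (q : ℝ) - 1 := by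
        push_cast [hq1]; ring
      rw [this]; push_cast; ring
    rw [hexp, Real.rpow_add (by norm_num), Real.rpow_natCast]
    set s : ℝ := (2 : ℝ) ^ ((1 : ℝ) / 2) with hs
    have hs2 : s ^ 2 = 2 := by
      rw [hs, ← Real.rpow_natCast ((2:ℝ) ^ ((1:ℝ)/2)) 2, ← Real.rpow_mul (by norm_num)]
      norm_num
    have hsnn : 0 < s := Real.rpow_pos_of_pos (by norm_num) _
    set C : ℝ := (2 : ℝ) ^ (q - 1) with hC
    have hC1 : 1 ≤ C := one_le_pow₀ (by norm_num)
    have hq2 : (2 : ℝ) ^ q = 2 * C := by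
      rw [hC, ← pow_succ']
      congr 1
      omega
    rw [hq2]
    have h34 : 3 * s - 4 ≥ 0 := by nlinarith
    nlinarith [mul_nonneg (by linarith : (0:ℝ) ≤ C) h34]
  · -- n = 2q + 1
    subst hq
    have hp : pCeil (2 * q + 1) 2 = q + 1 := by unfold pCeil; omega
    have hc : constr (2 * q + 1) 2 = (2 ^ q - 1) + (2 ^ (q + 1) - 1) := by
      unfold constr
      rw [hp]
      have h0 : (q + 1) * 2 - (2 * q + 1) = 1 := by omega
      rw [h0]
      simp
    rw [hc]
    have h1 : (1 : ℕ) ≤ 2 ^ q := Nat.one_le_two_pow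
    have h2 : (1 : ℕ) ≤ 2 ^ (q + 1) := Nat.one_le_two_pow
    have hcr : (((2 ^ q - 1) + (2 ^ (q + 1) - 1) : ℕ) : ℝ) = 3 * (2 : ℝ) ^ q - 2 := by
      push_cast [h1, h2]
      ring
    rw [hcr]
    have hexp : (((2 * q + 1 : ℕ) : ℝ) - 1) / 2 = ((q : ℕ) : ℝ) := by push_cast; ring
    rw [hexp, Real.rpow_natCast]
    linarith

theorem stmt17 (n : ℕ) (hn : 1 ≤ n) :
    2 * (2 : ℝ) ^ (((n : ℝ) - 1) / 2) - 1 ≤ (opt n 2 : ℝ) ∧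
    (constr n 2 : ℝ) ≤ 3 / 2 * (opt n 2 : ℝ) := by
  have h1 := opt_real n hn
  have h2 := constr_real n hn
  exact ⟨h1, by linarith⟩
end

section
/- If G is an (n,k)-generator and S ⊆ [n] with |S| = k such that every member of G intersects S in at most one element, then ∏_{s ∈ S} |G(s)| ≥ 2^{n-k}, and hence ∑_{s ∈ S} |G(s)| ≥ k·2^{(n-k)/k}. -/
theorem stmt18 (n k : ℕ) (hk : 1 ≤ k)
    (G : Finset (Finset (Fin n))) (hG : IsGenerator n k G)
    (S : Finset (Fin n)) (hS : S.card = k)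
    (hmeet : ∀ g ∈ G, (g ∩ S).card ≤ 1) :
    2 ^ (n - k) ≤ ∏ s ∈ S, (G.filter fun g => s ∈ g).card ∧
    (k : ℝ) * 2 ^ (((n : ℝ) - k) / k) ≤
      ∑ s ∈ S, ((G.filter fun g => s ∈ g).card : ℝ) := by
  classical
  have hSne : S.Nonempty := Finset.card_pos.mp (by omega)
  have hkn : k ≤ n := by
    have := Finset.card_le_card (Finset.subset_univ S)
    simpa [hS] using this
  -- decompositions
  have hdec : ∀ T : Finset (Fin n), ∃ 𝒮 : Finset (Finset (Fin n)), 𝒮 ⊆ G ∧ 𝒮.card ≤ k ∧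
      (𝒮 : Set (Finset (Fin n))).Pairwise Disjoint ∧ S ∪ T = 𝒮.sup id :=
    fun T => hG.2 (S ∪ T) (hSne.mono Finset.subset_union_left)
  choose 𝒮 h𝒮G h𝒮k h𝒮dis h𝒮sup using hdec
  have hex : ∀ T : Finset (Fin n), ∀ s ∈ S, ∃ g ∈ 𝒮 T, s ∈ g := by
    intro T s hs
    have : s ∈ (𝒮 T).sup id := by
      rw [← h𝒮sup]; exact Finset.mem_union_left _ hs
    simpa using Finset.mem_sup.mp this
  choose gf hgf1 hgf2 using hex
  -- injectivity of s ↦ gf T s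
  have hginj : ∀ T : Finset (Fin n), ∀ (s : Fin n) (hs : s ∈ S) (t : Fin n) (ht : t ∈ S),
      gf T s hs = gf T t ht → s = t := by
    intro T s hs t ht hst
    have h1 : s ∈ gf T t ht ∩ S := by
      rw [Finset.mem_inter, ← hst]; exact ⟨hgf2 T s hs, hs⟩
    have h2 : t ∈ gf T t ht ∩ S := Finset.mem_inter.mpr ⟨hgf2 T t ht, ht⟩
    have := hmeet _ (h𝒮G T (hgf1 T t ht))
    exact Finset.card_le_one.mp this s h1 t h2
  -- the image of s ↦ gf T s is all of 𝒮 T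
  have himg : ∀ T : Finset (Fin n),
      S.attach.image (fun s => gf T s.1 s.2) = 𝒮 T := by
    intro T
    apply Finset.eq_of_subset_of_card_le
    · intro g hg
      simp only [Finset.mem_image] at hg
      obtain ⟨s, _, rfl⟩ := hg
      exact hgf1 T s.1 s.2
    · calc (𝒮 T).card ≤ k := h𝒮k T
        _ = S.attach.card := by simp [hS]
        _ = (S.attach.image (fun s => gf T s.1 s.2)).card := by
            rw [Finset.card_image_of_injOn]
            intro a _ b _ hab
            exact Subtype.ext (hginj T a.1 a.2 b.1 b.2 hab)
  have hsup : ∀ T : Finset (Fin n),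
      S.attach.sup (fun s => gf T s.1 s.2) = S ∪ T := by
    intro T
    rw [h𝒮sup, ← himg T, Finset.sup_image]
    rfl
  -- part 1
  have key : 2 ^ (n - k) ≤ ∏ s ∈ S, (G.filter fun g => s ∈ g).card := by
    have hcard : (Sᶜ.powerset).card = 2 ^ (n - k) := by
      rw [Finset.card_powerset, Finset.card_compl, Fintype.card_fin, hS]
    rw [← hcard, ← Finset.card_pi]
    apply Finset.card_le_card_of_injOn (fun T => fun s hs => gf T s hs)
    · intro T _
      rw [Finset.mem_coe, Finset.mem_pi]
      intro s hs
      rw [Finset.mem_filter]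
      exact ⟨h𝒮G T (hgf1 T s hs), hgf2 T s hs⟩
    · intro T₁ hT₁ T₂ hT₂ hf
      have hsupeq : S ∪ T₁ = S ∪ T₂ := by
        rw [← hsup T₁, ← hsup T₂]
        apply Finset.sup_congr rfl
        intro s _
        exact congrFun (congrFun hf s.1) s.2
      have hd : ∀ T : Finset (Fin n), T ∈ Sᶜ.powerset → (S ∪ T) \ S = T := by
        intro T hT
        rw [Finset.union_sdiff_left, Finset.sdiff_eq_self_of_disjoint]
        rw [Finset.mem_powerset] at hT
        exact Finset.disjoint_left.mpr fun a haT haS =>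
          (Finset.mem_compl.mp (hT haT)) haS
      rw [← hd T₁ hT₁, ← hd T₂ hT₂, hsupeq]
  refine ⟨key, ?_⟩
  -- part 2: AM-GM
  set a : Fin n → ℝ := fun s => ((G.filter fun g => s ∈ g).card : ℝ) with ha
  have hanneg : ∀ s ∈ S, (0:ℝ) ≤ a s := fun s _ => Nat.cast_nonneg _
  have h1 : (2:ℝ) ^ ((n - k : ℕ) : ℝ) ≤ ∏ s ∈ S, a s := by
    rw [Real.rpow_natCast]
    calc ((2:ℝ))^(n-k) = ((2^(n-k) : ℕ) : ℝ) := by push_cast; ring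
      _ ≤ ((∏ s ∈ S, (G.filter fun g => s ∈ g).card : ℕ) : ℝ) := by
          exact_mod_cast key
      _ = ∏ s ∈ S, a s := by push_cast; rfl
  have hk0 : (0:ℝ) < k := by exact_mod_cast hk
  have hgm := Real.geom_mean_le_arith_mean_weighted S (fun _ => 1 / (k:ℝ)) a
    (fun i _ => by positivity)
    (by rw [Finset.sum_const, hS, nsmul_eq_mul]; field_simp) hanneg
  have hprod : ∏ i ∈ S, a i ^ (1 / (k:ℝ)) = (∏ i ∈ S, a i) ^ (1 / (k:ℝ)) := by
    rw [← Real.finset_prod_rpow S a hanneg]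
  rw [hprod] at hgm
  have h2 : ((2:ℝ) ^ ((n - k : ℕ) : ℝ)) ^ (1 / (k:ℝ)) ≤ (∏ i ∈ S, a i) ^ (1 / (k:ℝ)) :=
    Real.rpow_le_rpow (by positivity) h1 (by positivity)
  have h3 : ((2:ℝ) ^ ((n - k : ℕ) : ℝ)) ^ (1 / (k:ℝ)) = (2:ℝ) ^ (((n:ℝ) - k) / k) := by
    rw [← Real.rpow_mul (by norm_num)]
    congr 1
    rw [Nat.cast_sub hkn]
    ring
  have h4 : (2:ℝ) ^ (((n:ℝ) - k) / k) ≤ ∑ i ∈ S, (1 / (k:ℝ)) * a i := by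
    rw [← h3]; exact h2.trans hgm
  have h5 : ∑ i ∈ S, (1 / (k:ℝ)) * a i = (∑ i ∈ S, a i) / k := by
    rw [← Finset.mul_sum]; ring
  rw [h5] at h4
  calc (k:ℝ) * 2 ^ (((n:ℝ) - k) / k) ≤ k * ((∑ i ∈ S, a i) / k) := by
        exact mul_le_mul_of_nonneg_left h4 (le_of_lt hk0)
    _ = ∑ i ∈ S, a i := by field_simp
end
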